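/- Every finite abelian subgroup A of GL(n, ℂ) can be generated by n or fewer elements. -/

import Mathlib

open Subgroup Function Module

/-- If the kernel of `f` lies in the closure of `T` and `f g` generates all values of `f`,
then `insert g T` generates the whole group. -/
lemma aux_closure_insert {G C : Type*} [Group G] [Group C] (f : G →* C)
    (T : Set G) (hT : f.ker ≤ Subgroup.closure T) (g : G)
    (hg : ∀ x : G, f x ∈ Subgroup.zpowers (f g)) :
    Subgroup.closure (insert g T) = ⊤ := by
  rw [eq_top_iff]
  intro x _
  obtain ⟨m, hm⟩ := Subgroup.mem_zpowers_iff.mp (hg x)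
  have hker : x * (g ^ m)⁻¹ ∈ f.ker := by
    simp [MonoidHom.mem_ker, ← hm]
  have h1 : x * (g ^ m)⁻¹ ∈ Subgroup.closure (insert g T) :=
    Subgroup.closure_mono (Set.subset_insert g T) (hT hker)
  have h2 : g ^ m ∈ Subgroup.closure (insert g T) :=
    zpow_mem (Subgroup.subset_closure (Set.mem_insert g T)) m
  simpa using mul_mem h1 h2

/-- A finite group embedding in `(ℂˣ)^m` is generated by at most `m` elements. -/
lemma aux_gen (m : ℕ) : ∀ (G : Type) [Group G] [Finite G] (ψ : G →* (Fin m → ℂˣ)),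
    Function.Injective ψ → ∃ S : Finset G, S.card ≤ m ∧ Subgroup.closure (S : Set G) = ⊤ := by
  induction m with
  | zero =>
    intro G _ _ ψ hψ
    have hsub : ∀ x : G, x = 1 := fun x => hψ (Subsingleton.elim _ _)
    refine ⟨∅, by simp, ?_⟩
    rw [eq_top_iff]
    intro x _
    rw [hsub x]
    exact one_mem _
  | succ m ih =>
    intro G _ _ ψ hψ
    classical
    set fl : G →* ℂˣ := (Pi.evalMonoidHom (fun _ : Fin (m+1) => ℂˣ) (Fin.last m)).comp ψ with hfl
    have hfin : Finite fl.range := Finite.of_surjective _ fl.rangeRestrict_surjective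
    have hcyc : IsCyclic fl.range := by
      refine isCyclic_of_subgroup_isDomain (R := ℂ) ((Units.coeHom ℂ).comp fl.range.subtype) ?_
      exact Units.val_injective.comp Subtype.coe_injective
    obtain ⟨⟨c, hc_mem⟩, hgen⟩ := IsCyclic.exists_generator (α := fl.range)
    obtain ⟨g, hg⟩ := hc_mem
    have hg' : ∀ x : G, fl x ∈ Subgroup.zpowers (fl g) := by
      intro x
      obtain ⟨k, hk⟩ := Subgroup.mem_zpowers_iff.mp (hgen ⟨fl x, ⟨x, rfl⟩⟩)
      refine Subgroup.mem_zpowers_iff.mpr ⟨k, ?_⟩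
      rw [hg]
      exact congrArg Subtype.val hk
    set K := fl.ker with hK
    let res : (Fin (m+1) → ℂˣ) →* (Fin m → ℂˣ) :=
      Pi.monoidHom fun i => Pi.evalMonoidHom (fun _ : Fin (m+1) => ℂˣ) i.castSucc
    let ψ' : K →* (Fin m → ℂˣ) := res.comp (ψ.comp K.subtype)
    have hψ' : Function.Injective ψ' := by
      intro x y hxy
      have hx : ψ (x : G) (Fin.last m) = 1 := x.2
      have hy : ψ (y : G) (Fin.last m) = 1 := y.2
      have : ψ (x : G) = ψ (y : G) := by
        funext i
        induction i using Fin.lastCases with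
        | last => rw [hx, hy]
        | cast j => exact congrFun hxy j
      exact Subtype.ext (hψ this)
    obtain ⟨S, hScard, hSclos⟩ := ih K ψ' hψ'
    refine ⟨insert g (S.image (K.subtype)), ?_, ?_⟩
    · calc (insert g (S.image (K.subtype))).card ≤ (S.image (K.subtype)).card + 1 :=
            Finset.card_insert_le _ _
        _ ≤ S.card + 1 := by gcongr; exact Finset.card_image_le
        _ ≤ m + 1 := by omega
    · have hker : fl.ker ≤ Subgroup.closure ((S.image (K.subtype) : Finset G) : Set G) := by
        rw [Finset.coe_image]
        rw [← MonoidHom.map_closure, hSclos]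
        intro x hx
        exact ⟨⟨x, hx⟩, trivial, rfl⟩
      have := aux_closure_insert fl _ hker g hg'
      rw [Finset.coe_insert]; exact this

/-- **Theorem.** Every finite abelian subgroup `A` of `GL(n, ℂ)` can be generated by `n`
or fewer elements. -/
theorem stmt_13 (n : ℕ) (A : Subgroup (Matrix.GeneralLinearGroup (Fin n) ℂ))
    (hA : IsMulCommutative A) (hfin : Finite A) :
    ∃ S : Finset (Matrix.GeneralLinearGroup (Fin n) ℂ),
      S.card ≤ n ∧ Subgroup.closure (S : Set (Matrix.GeneralLinearGroup (Fin n) ℂ)) = A := by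
  classical
  -- the action of `A` on `ℂ^n`
  let F : ↥A →* Module.End ℂ (Fin n → ℂ) :=
    ((Matrix.toLinAlgEquiv' (R := ℂ) (n := Fin n)).toRingEquiv.toMulEquiv.toMonoidHom).comp
      ((Units.coeHom (Matrix (Fin n) (Fin n) ℂ)).comp A.subtype)
  have hFinj : Function.Injective F :=
    (Matrix.toLinAlgEquiv' (R := ℂ) (n := Fin n)).injective.comp
      (Units.val_injective.comp Subtype.coe_injective)
  have hcomm : ∀ a b : ↥A, a * b = b * a := fun a b => hA.is_comm.comm a b
  have hCom : ∀ a b : ↥A, Commute (F a) (F b) := by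
    intro a b
    unfold Commute SemiconjBy
    rw [← map_mul, ← map_mul, hcomm a b]
  have hss : ∀ a : ↥A, (F a).IsFinitelySemisimple := by
    intro a
    have hm : 0 < orderOf a := orderOf_pos a
    have h1 : (F a) ^ orderOf a = 1 := by
      rw [← map_pow, pow_orderOf_eq_one, map_one]
    have hsq : Squarefree (Polynomial.X ^ orderOf a - 1 : Polynomial ℂ) :=
      (Polynomial.X_pow_sub_one_separable_iff.mpr
        (Nat.cast_ne_zero.mpr hm.ne')).squarefree
    have haev : Polynomial.aeval (F a) (Polynomial.X ^ orderOf a - 1 : Polynomial ℂ) = 0 := by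
      simp [h1]
    exact (Module.End.isSemisimple_of_squarefree_aeval_eq_zero hsq haev).isFinitelySemisimple
  have hmax : ∀ (a : ↥A) (μ : ℂ),
      (F a).maxGenEigenspace μ = (F a).eigenspace μ := fun a μ =>
    (hss a).maxGenEigenspace_eq_eigenspace μ
  set E : (↥A → ℂ) → Submodule ℂ (Fin n → ℂ) :=
    fun χ => ⨅ a, (F a).maxGenEigenspace (χ a) with hE
  have hspan : ⨆ χ : ↥A → ℂ, E χ = ⊤ :=
    Module.End.iSup_iInf_maxGenEigenspace_eq_top_of_iSup_maxGenEigenspace_eq_top_of_commute F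
      (fun a b _ => hCom a b) (fun a => Module.End.iSup_maxGenEigenspace_eq_top (F a))
  have hind : iSupIndep E :=
    Module.End.independent_iInf_maxGenEigenspace_of_forall_mapsTo F
      (fun i j φ => Module.End.mapsTo_maxGenEigenspace_of_comm (hCom j i) φ)
  have heig : ∀ (χ : ↥A → ℂ) (a : ↥A) (x : Fin n → ℂ), x ∈ E χ → F a x = χ a • x := by
    intro χ a x hx
    have hx' : x ∈ (F a).maxGenEigenspace (χ a) := (iInf_le _ a : E χ ≤ _) hx
    rw [hmax a (χ a)] at hx'
    exact Module.End.mem_eigenspace_iff.mp hx'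
  letI : Fintype {χ : ↥A → ℂ // E χ ≠ ⊥} := hind.fintypeNeBotOfFiniteDimensional
  have hcard : Fintype.card {χ : ↥A → ℂ // E χ ≠ ⊥} ≤ n := by
    have := hind.subtype_ne_bot_le_finrank
    rwa [Module.finrank_fin_fun ℂ] at this
  -- choose a joint eigenvector for each character
  have hv : ∀ χ : {χ : ↥A → ℂ // E χ ≠ ⊥}, ∃ x : Fin n → ℂ, x ∈ E χ.1 ∧ x ≠ 0 := by
    intro χ
    obtain ⟨x, hx, hx0⟩ := (Submodule.ne_bot_iff _).mp χ.2
    exact ⟨x, hx, hx0⟩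
  choose v hvE hv0 using hv
  have key : ∀ (χ : {χ : ↥A → ℂ // E χ ≠ ⊥}) (a b : ℂ), a • v χ = b • v χ → a = b :=
    fun χ a b h => smul_left_injective ℂ (hv0 χ) h
  -- each simultaneous eigenvalue function is a character
  let charHom : {χ : ↥A → ℂ // E χ ≠ ⊥} → (↥A →* ℂ) := fun χ =>
    { toFun := χ.1
      map_one' := by
        refine key χ _ _ ?_
        have h1 := heig χ.1 1 (v χ) (hvE χ)
        rw [map_one] at h1
        simpa using h1.symm
      map_mul' := by
        intro a b
        refine key χ _ _ ?_
        have hab := heig χ.1 (a * b) (v χ) (hvE χ)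
        have ha := heig χ.1 a (v χ) (hvE χ)
        have hb := heig χ.1 b (v χ) (hvE χ)
        rw [map_mul] at hab
        rw [← hab]
        calc (F a * F b) (v χ) = F a (F b (v χ)) := rfl
          _ = F a (χ.1 b • v χ) := by rw [hb]
          _ = χ.1 b • F a (v χ) := map_smul _ _ _
          _ = χ.1 b • χ.1 a • v χ := by rw [ha]
          _ = (χ.1 a * χ.1 b) • v χ := by rw [smul_smul, mul_comm]
      }
  -- the embedding of `A` into a product of copies of `ℂˣ`
  let ψ : ↥A →* ({χ : ↥A → ℂ // E χ ≠ ⊥} → ℂˣ) :=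
    Pi.monoidHom fun χ => (charHom χ).toHomUnits
  have hψinj : Function.Injective ψ := by
    refine (injective_iff_map_eq_one ψ).mpr ?_
    intro a ha
    have hval : ∀ χ : {χ : ↥A → ℂ // E χ ≠ ⊥}, χ.1 a = 1 := by
      intro χ
      have h1 : ψ a χ = 1 := congrFun ha χ
      have h2 : ((charHom χ).toHomUnits a : ℂ) = 1 := by
        rw [show ψ a χ = (charHom χ).toHomUnits a from rfl] at h1
        rw [h1]; rfl
      simp at h2; exact h2
    have hFa : F a = 1 := by
      have hle : (⊤ : Submodule ℂ (Fin n → ℂ)) ≤ LinearMap.eqLocus (F a) 1 := by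
        rw [← hspan]
        refine iSup_le fun χ => ?_
        by_cases hχ : E χ = ⊥
        · rw [hχ]; exact bot_le
        · intro x hx
          have hx' := heig χ a x hx
          have : χ a = 1 := hval ⟨χ, hχ⟩
          rw [this, one_smul] at hx'
          simpa [LinearMap.mem_eqLocus] using hx'
      refine LinearMap.ext fun x => ?_
      exact LinearMap.mem_eqLocus.mp (hle Submodule.mem_top)
    have : F a = F 1 := by rw [map_one, hFa]
    exact hFinj this
  -- reindex over `Fin m`
  set m := Fintype.card {χ : ↥A → ℂ // E χ ≠ ⊥} with hm
  let e := Fintype.equivFin {χ : ↥A → ℂ // E χ ≠ ⊥}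
  let reindex : ({χ : ↥A → ℂ // E χ ≠ ⊥} → ℂˣ) →* (Fin m → ℂˣ) :=
    Pi.monoidHom fun i => Pi.evalMonoidHom _ (e.symm i)
  have hreinj : Function.Injective reindex := by
    intro x y h
    funext χ
    have h1 : reindex x (e χ) = reindex y (e χ) := congrFun h (e χ)
    have h2 : x (e.symm (e χ)) = y (e.symm (e χ)) := h1
    rwa [Equiv.symm_apply_apply] at h2
  have := hfin
  obtain ⟨S, hS1, hS2⟩ := aux_gen m (↥A) (reindex.comp ψ) (hreinj.comp hψinj)
  refine ⟨S.image (A.subtype), ?_, ?_⟩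
  · exact le_trans Finset.card_image_le (le_trans hS1 hcard)
  · rw [Finset.coe_image, ← MonoidHom.map_closure, hS2, ← MonoidHom.range_eq_map,
      Subgroup.range_subtype]
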